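/- With S̃ = c₀ ρ^{−2/3} cos(2θ/3) + c₀ w near a corner, where ρ^{1/3}|∇w| ≤ m₂ on Ω̄, for every M > 0 there exists ε₂ > 0 such that for all ε ∈ (0,ε₂), the function θ ↦ S̃(ε, θ) is strictly decreasing on the set of angles θ with ρ^{−2/3}|cos(2θ/3)| ≤ M (i.e. on ∂B(S_i,ε) ∩ Ω outside U_i^M). -/

import Mathlib

open Real Set

set_option maxHeartbeats 1000000 in
/-- Near a nonconvex corner write `S̃(ρ,θ) = c₀ ρ^{−2/3} cos(2θ/3) + c₀ w(ρ,θ)` in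
polar coordinates, where the angular derivative of `w` satisfies
`|∂_θ w(ρ,θ)| ≤ m₂ ρ^{2/3}` (coming from `ρ^{1/3}|∇w| ≤ m₂`). For every `M > 0` there
is `ε₂ > 0` such that for all `ε ∈ (0,ε₂)` the function `θ ↦ S̃(ε,θ)` is strictly
decreasing on the set of angles `θ ∈ [0, 3π/2]` with `ε^{−2/3}|cos(2θ/3)| ≤ M`
(that is, on `∂B(S_i,ε) ∩ Ω` outside `U_i^M`). -/
theorem stmt9 (c₀ m₂ : ℝ) (hc₀ : 0 < c₀) (hm₂ : 0 ≤ m₂)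
    (w : ℝ → ℝ → ℝ)
    (hwd : ∀ ρ θ : ℝ, 0 < ρ → DifferentiableAt ℝ (w ρ) θ)
    (hw : ∀ ρ θ : ℝ, 0 < ρ → |deriv (w ρ) θ| ≤ m₂ * ρ ^ ((2:ℝ)/3))
    (M : ℝ) (hM : 0 < M) :
    ∃ ε₂ > (0:ℝ), ∀ ε ∈ Set.Ioo (0:ℝ) ε₂,
      StrictAntiOn (fun θ : ℝ => c₀ * ε ^ (-(2:ℝ)/3) * Real.cos (2 * θ / 3) + c₀ * w ε θ)
        {θ : ℝ | θ ∈ Set.Icc (0:ℝ) (3 * π / 2) ∧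
          ε ^ (-(2:ℝ)/3) * |Real.cos (2 * θ / 3)| ≤ M} := by
  have h1 : (0:ℝ) < 1 / (2 * M) := by positivity
  have h2 : (0:ℝ) < 1 / (3 * (m₂ + 1)) := by positivity
  set ε₂ : ℝ := min ((1 / (2 * M)) ^ ((3:ℝ)/2)) ((1 / (3 * (m₂ + 1))) ^ ((3:ℝ)/4)) with hε₂def
  have hε₂pos : 0 < ε₂ := lt_min (Real.rpow_pos_of_pos h1 _) (Real.rpow_pos_of_pos h2 _)
  refine ⟨ε₂, hε₂pos, ?_⟩
  rintro ε ⟨hε, hεlt⟩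
  set a := ε ^ ((2:ℝ)/3) with ha_def
  have ha : 0 < a := Real.rpow_pos_of_pos hε _
  have hneg : ε ^ (-(2:ℝ)/3) = a⁻¹ := by
    rw [show (-(2:ℝ)/3) = -((2:ℝ)/3) by ring, Real.rpow_neg hε.le]
  have hainv : a⁻¹ * a = 1 := inv_mul_cancel₀ ha.ne'
  -- bound 1 : M * a ≤ 1/2
  have hMa : M * a ≤ 1 / 2 := by
    have hle : ε ≤ (1 / (2 * M)) ^ ((3:ℝ)/2) := le_of_lt (lt_of_lt_of_le hεlt (min_le_left _ _))
    have h : a ≤ 1 / (2 * M) := by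
      calc a = ε ^ ((2:ℝ)/3) := rfl
        _ ≤ ((1 / (2 * M)) ^ ((3:ℝ)/2)) ^ ((2:ℝ)/3) :=
            Real.rpow_le_rpow hε.le hle (by norm_num)
        _ = 1 / (2 * M) := by
            rw [← Real.rpow_mul h1.le]; norm_num
    calc M * a ≤ M * (1 / (2 * M)) := by nlinarith
      _ = 1 / 2 := by field_simp
  -- bound 2 : m₂ * (a * a) < 1/3
  have hm2a : m₂ * (a * a) < 1 / 3 := by
    have hle : ε ≤ (1 / (3 * (m₂ + 1))) ^ ((3:ℝ)/4) :=
      le_of_lt (lt_of_lt_of_le hεlt (min_le_right _ _))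
    have h : a * a ≤ 1 / (3 * (m₂ + 1)) := by
      have haa : a * a = ε ^ ((4:ℝ)/3) := by
        rw [ha_def, ← Real.rpow_add hε]; norm_num
      rw [haa]
      calc ε ^ ((4:ℝ)/3) ≤ ((1 / (3 * (m₂ + 1))) ^ ((3:ℝ)/4)) ^ ((4:ℝ)/3) :=
            Real.rpow_le_rpow hε.le hle (by norm_num)
        _ = 1 / (3 * (m₂ + 1)) := by rw [← Real.rpow_mul h2.le]; norm_num
    have key : (m₂ + 1) * (1 / (3 * (m₂ + 1))) = 1 / 3 := by
      field_simp
    nlinarith [mul_le_mul_of_nonneg_left h hm₂, h2, ha]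
  -- the set is convex (an interval), since cos(2θ/3) is antitone on [0, 3π/2]
  set s : Set ℝ := {θ : ℝ | θ ∈ Set.Icc (0:ℝ) (3 * π / 2) ∧
      ε ^ (-(2:ℝ)/3) * |Real.cos (2 * θ / 3)| ≤ M} with hs_def
  have habs : ∀ θ ∈ s, |Real.cos (2 * θ / 3)| ≤ M * a := by
    intro θ hθ
    have h := hθ.2
    rw [hneg] at h
    have := mul_le_mul_of_nonneg_left h ha.le
    calc |Real.cos (2 * θ / 3)| = a * (a⁻¹ * |Real.cos (2 * θ / 3)|) := by
          rw [← mul_assoc, mul_inv_cancel₀ ha.ne', one_mul]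
      _ ≤ a * M := this
      _ = M * a := mul_comm _ _
  have hconv : Convex ℝ s := by
    rw [convex_iff_ordConnected]
    constructor
    intro x hx y hy z hz
    have hx1 := hx.1; have hy1 := hy.1
    have hzI : z ∈ Set.Icc (0:ℝ) (3 * π / 2) :=
      ⟨le_trans hx1.1 hz.1, le_trans hz.2 hy1.2⟩
    refine ⟨hzI, ?_⟩
    have hxa := habs x hx
    have hya := habs y hy
    -- cos(2·/3) is antitone on [0, 3π/2]
    have hmono : Real.cos (2 * y / 3) ≤ Real.cos (2 * z / 3) ∧
        Real.cos (2 * z / 3) ≤ Real.cos (2 * x / 3) := by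
      constructor
      · apply Real.cos_le_cos_of_nonneg_of_le_pi
        · linarith [hzI.1]
        · linarith [hy1.2, Real.pi_pos]
        · linarith [hz.2]
      · apply Real.cos_le_cos_of_nonneg_of_le_pi
        · linarith [hx1.1]
        · linarith [hzI.2, Real.pi_pos]
        · linarith [hz.1]
    have hzabs : |Real.cos (2 * z / 3)| ≤ M * a := by
      rw [abs_le] at *
      constructor
      · linarith [hxa.1, hya.1, hmono.1]
      · linarith [hxa.2, hya.2, hmono.2]
    rw [hneg]
    calc a⁻¹ * |Real.cos (2 * z / 3)| ≤ a⁻¹ * (M * a) :=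
          mul_le_mul_of_nonneg_left hzabs (inv_nonneg.mpr ha.le)
      _ = M := by field_simp
  -- continuity
  have hcont : ContinuousOn
      (fun θ : ℝ => c₀ * ε ^ (-(2:ℝ)/3) * Real.cos (2 * θ / 3) + c₀ * w ε θ) s := by
    apply ContinuousOn.add
    · exact (continuous_const.mul (Real.continuous_cos.comp (by continuity))).continuousOn
    · exact (continuous_const.mul
        (continuous_iff_continuousAt.mpr fun θ =>
          (hwd ε θ hε).continuousAt)).continuousOn
  -- derivative is negative on the interior
  apply strictAntiOn_of_deriv_neg hconv hcont
  intro θ hθint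
  have hθ : θ ∈ s := interior_subset hθint
  have hθI := hθ.1
  have hcosb : |Real.cos (2 * θ / 3)| ≤ M * a := habs θ hθ
  have hsin : (1:ℝ) / 2 ≤ Real.sin (2 * θ / 3) := by
    have hsn : 0 ≤ Real.sin (2 * θ / 3) := by
      apply Real.sin_nonneg_of_nonneg_of_le_pi
      · linarith [hθI.1]
      · linarith [hθI.2, Real.pi_pos]
    have hc2 : |Real.cos (2 * θ / 3)| ≤ 1 / 2 := le_trans hcosb hMa
    have hpy := Real.sin_sq_add_cos_sq (2 * θ / 3)
    rw [abs_le] at hc2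
    nlinarith [hsn, hpy, hc2.1, hc2.2]
  -- compute the derivative
  have hd1 : HasDerivAt (fun θ : ℝ => Real.cos (2 * θ / 3))
      (-Real.sin (2 * θ / 3) * (2 / 3)) θ := by
    have hinner : HasDerivAt (fun θ : ℝ => 2 * θ / 3) (2 / 3) θ := by
      simpa using ((hasDerivAt_id θ).const_mul (2:ℝ)).div_const 3
    exact (Real.hasDerivAt_cos (2 * θ / 3)).comp θ hinner
  have hd : HasDerivAt
      (fun θ : ℝ => c₀ * ε ^ (-(2:ℝ)/3) * Real.cos (2 * θ / 3) + c₀ * w ε θ)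
      (c₀ * ε ^ (-(2:ℝ)/3) * (-Real.sin (2 * θ / 3) * (2 / 3)) + c₀ * deriv (w ε) θ) θ :=
    (hd1.const_mul _).add ((hwd ε θ hε).hasDerivAt.const_mul c₀)
  rw [hd.deriv]
  have hwb := hw ε θ hε
  rw [← ha_def] at hwb
  rw [hneg]
  rw [abs_le] at hwb
  have key : c₀ * a⁻¹ * (-Real.sin (2 * θ / 3) * (2 / 3)) ≤ c₀ * a⁻¹ * (-(1/2) * (2/3)) := by
    apply mul_le_mul_of_nonneg_left _ (by positivity)
    nlinarith
  have key2 : c₀ * deriv (w ε) θ ≤ c₀ * (m₂ * a) :=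
    mul_le_mul_of_nonneg_left hwb.2 hc₀.le
  have hfin : c₀ * a⁻¹ * (-(1/2) * (2/3)) + c₀ * (m₂ * a) < 0 := by
    have h3 : m₂ * a * a < 1 / 3 := by nlinarith
    have : m₂ * a < 1 / 3 * a⁻¹ := by
      have hmul := mul_lt_mul_of_pos_right h3 (inv_pos.mpr ha)
      calc m₂ * a = m₂ * a * a * a⁻¹ := by field_simp
        _ < 1 / 3 * a⁻¹ := hmul
    nlinarith [mul_pos hc₀ (inv_pos.mpr ha)]
  linarith
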